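/- The sequence a_n = (n² + n + 1/4) − (n² + n + 1/3)·sinc(π/(2n+1)), for n ≥ 1, is increasing and converges to (π² − 2)/24; moreover 0.32 ≤ a_1 and (π² − 2)/24 ≤ 0.33. -/

import Mathlib

set_option maxHeartbeats 1000000

open Real Filter

noncomputable def seqA (n : ℕ) : ℝ :=
  ((n : ℝ)^2 + n + 1/4) -
    ((n : ℝ)^2 + n + 1/3) * (Real.sin (Real.pi / (2 * n + 1)) / (Real.pi / (2 * n + 1)))

lemma pos_aux' {f f' : ℝ → ℝ} (hd : ∀ x, HasDerivAt f (f' x) x) (h0 : f 0 = 0)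
    (hf' : ∀ x, 0 ≤ x → 0 ≤ f' x) : ∀ x, 0 ≤ x → 0 ≤ f x := by
  intro x hx
  have hm : MonotoneOn f (Set.Ici 0) := by
    apply monotoneOn_of_deriv_nonneg (convex_Ici 0)
    · exact fun y _ => (hd y).continuousAt.continuousWithinAt
    · intro y hy
      exact (hd y).differentiableAt.differentiableWithinAt
    · intro y hy
      rw [(hd y).deriv]
      exact hf' y (le_of_lt (by simpa using hy))
  simpa [h0] using hm Set.self_mem_Ici hx hx

lemma sin_ge_cubic' : ∀ x : ℝ, 0 ≤ x → x - x^3/6 ≤ Real.sin x := by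
  have h := pos_aux' (f := fun x => Real.sin x - (x - x^3/6))
    (f' := fun x => Real.cos x - (1 - x^2/2))
    (fun x => by
      have := (Real.hasDerivAt_sin x).sub ((hasDerivAt_id x).sub ((hasDerivAt_pow 3 x).div_const 6))
      exact this.congr_deriv (by simp; ring))
    (by norm_num)
    (fun x _ => by nlinarith [Real.one_sub_sq_div_two_le_cos (x := x)])
  intro x hx; linarith [h x hx]

lemma cos_le_quartic' : ∀ x : ℝ, 0 ≤ x → Real.cos x ≤ 1 - x^2/2 + x^4/24 := by
  have h := pos_aux' (f := fun x => (1 - x^2/2 + x^4/24) - Real.cos x)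
    (f' := fun x => Real.sin x - (x - x^3/6))
    (fun x => by
      have := (((hasDerivAt_const x (1:ℝ)).sub ((hasDerivAt_pow 2 x).div_const 2)).add
        ((hasDerivAt_pow 4 x).div_const 24)).sub (Real.hasDerivAt_cos x)
      exact this.congr_deriv (by simp; ring))
    (by norm_num)
    (fun x hx => by linarith [sin_ge_cubic' x hx])
  intro x hx; linarith [h x hx]

lemma sin_le_quintic' : ∀ x : ℝ, 0 ≤ x → Real.sin x ≤ x - x^3/6 + x^5/120 := by
  have h := pos_aux' (f := fun x => (x - x^3/6 + x^5/120) - Real.sin x)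
    (f' := fun x => (1 - x^2/2 + x^4/24) - Real.cos x)
    (fun x => by
      have := (((hasDerivAt_id x).sub ((hasDerivAt_pow 3 x).div_const 6)).add
        ((hasDerivAt_pow 5 x).div_const 120)).sub (Real.hasDerivAt_sin x)
      exact this.congr_deriv (by simp; ring))
    (by norm_num)
    (fun x hx => by linarith [cos_le_quartic' x hx])
  intro x hx; linarith [h x hx]

lemma cos_ge_sextic' : ∀ x : ℝ, 0 ≤ x → 1 - x^2/2 + x^4/24 - x^6/720 ≤ Real.cos x := by
  have h := pos_aux' (f := fun x => Real.cos x - (1 - x^2/2 + x^4/24 - x^6/720))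
    (f' := fun x => (x - x^3/6 + x^5/120) - Real.sin x)
    (fun x => by
      have := (Real.hasDerivAt_cos x).sub ((((hasDerivAt_const x (1:ℝ)).sub
        ((hasDerivAt_pow 2 x).div_const 2)).add ((hasDerivAt_pow 4 x).div_const 24)).sub
        ((hasDerivAt_pow 6 x).div_const 720))
      exact this.congr_deriv (by simp; ring))
    (by norm_num)
    (fun x hx => by linarith [sin_le_quintic' x hx])
  intro x hx; linarith [h x hx]

lemma sin_ge_septic' : ∀ x : ℝ, 0 ≤ x → x - x^3/6 + x^5/120 - x^7/5040 ≤ Real.sin x := by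
  have h := pos_aux' (f := fun x => Real.sin x - (x - x^3/6 + x^5/120 - x^7/5040))
    (f' := fun x => Real.cos x - (1 - x^2/2 + x^4/24 - x^6/720))
    (fun x => by
      have := (Real.hasDerivAt_sin x).sub ((((hasDerivAt_id x).sub
        ((hasDerivAt_pow 3 x).div_const 6)).add ((hasDerivAt_pow 5 x).div_const 120)).sub
        ((hasDerivAt_pow 7 x).div_const 5040))
      exact this.congr_deriv (by simp; ring))
    (by norm_num)
    (fun x hx => by linarith [cos_ge_sextic' x hx])
  intro x hx; linarith [h x hx]

noncomputable def loB (m : ℝ) : ℝ :=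
  (π^2-2)/24 + (π^2/72 - π^4/480)*(1/m^2) - (π^4/1440)*(1/m^2)^2

noncomputable def hiB (m : ℝ) : ℝ :=
  loB m + (π^6/20160)*(1/m^2)^2 + (π^6/60480)*(1/m^2)^3

lemma step_lemma (m : ℝ) (hm : 3 ≤ m) : hiB m < loB (m+2) := by
  have hm0 : (0:ℝ) < m := by linarith
  have hm2 : (0:ℝ) < m + 2 := by linarith
  have hexp : loB (m+2) - hiB m = ((π^4/480 - π^2/72)*((4*m+4)*(m^4*(m+2)^2))
      + (π^4/1440)*(((m+2)^4 - m^4)*m^2)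
      - (π^6/20160)*(m^2*(m+2)^4) - (π^6/60480)*(m+2)^4)/(m^6*(m+2)^4) := by
    simp only [hiB, loB]; field_simp; ring
  have hp1 : (9.8696:ℝ) < π^2 := by nlinarith [Real.pi_gt_d6]
  have hp2 : π^2 < 9.86961 := by nlinarith [Real.pi_lt_d6, Real.pi_pos]
  have hA : (0.0658:ℝ) ≤ π^4/480 - π^2/72 := by nlinarith
  have hB2 : π^6/20160 ≤ 0.0477 := by nlinarith
  have hC : π^6/60480 ≤ 0.0159 := by nlinarith
  have t1 : (0.0658:ℝ)*((4*m+4)*(m^4*(m+2)^2)) ≤ (π^4/480 - π^2/72)*((4*m+4)*(m^4*(m+2)^2)) :=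
    mul_le_mul_of_nonneg_right hA (by positivity)
  have t2 : (π^6/20160)*(m^2*(m+2)^4) ≤ 0.0477*(m^2*(m+2)^4) :=
    mul_le_mul_of_nonneg_right hB2 (by positivity)
  have t3 : (π^6/60480)*(m+2)^4 ≤ 0.0159*(m+2)^4 :=
    mul_le_mul_of_nonneg_right hC (by positivity)
  have t4 : (0:ℝ) ≤ (π^4/1440)*(((m+2)^4 - m^4)*m^2) := by
    apply mul_nonneg (by positivity)
    apply mul_nonneg _ (by positivity)
    nlinarith
  have hq : (0:ℝ) ≤ m - 3 := by linarith
  have inner : (0:ℝ) < 0.0658*((4*m+4)*m^4) - (0.0477*m^2 + 0.0159)*(m+2)^2 := by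
    nlinarith [pow_nonneg hq 2, pow_nonneg hq 3, pow_nonneg hq 4, pow_nonneg hq 5]
  have hpoly : (0:ℝ) < (0.0658:ℝ)*((4*m+4)*(m^4*(m+2)^2)) - 0.0477*(m^2*(m+2)^4) - 0.0159*(m+2)^4 := by
    nlinarith [mul_pos inner (pow_pos hm2 2)]
  have hNpos : (0:ℝ) < (π^4/480 - π^2/72)*((4*m+4)*(m^4*(m+2)^2))
      + (π^4/1440)*(((m+2)^4 - m^4)*m^2)
      - (π^6/20160)*(m^2*(m+2)^4) - (π^6/60480)*(m+2)^4 := by linarith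
  have : 0 < loB (m+2) - hiB m := by rw [hexp]; positivity
  linarith

lemma seqA_sandwich (n : ℕ) (hn : 1 ≤ n) :
    loB (2*(n:ℝ)+1) ≤ seqA n ∧ seqA n ≤ hiB (2*(n:ℝ)+1) := by
  have hn1 : (1:ℝ) ≤ (n:ℝ) := by exact_mod_cast hn
  set m : ℝ := 2*(n:ℝ)+1 with hmdef
  have hm3 : (3:ℝ) ≤ m := by rw [hmdef]; linarith
  have hm0 : (0:ℝ) < m := by linarith
  have hx0 : 0 < π/m := div_pos Real.pi_pos hm0
  have hseq : seqA n = m^2/4 - (m^2/4 + 1/12) * (Real.sin (π/m) / (π/m)) := by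
    simp only [seqA, hmdef]
    ring_nf
  have h1 := sin_le_quintic' (π/m) hx0.le
  have h2 := sin_ge_septic' (π/m) hx0.le
  have hB : (0:ℝ) < m^2/4 + 1/12 := by positivity
  have hs_up : Real.sin (π/m) / (π/m) ≤ 1 - (π/m)^2/6 + (π/m)^4/120 := by
    rw [div_le_iff₀ hx0]
    have : (1 - (π/m)^2/6 + (π/m)^4/120)*(π/m) = (π/m) - (π/m)^3/6 + (π/m)^5/120 := by ring
    linarith
  have hs_lo : 1 - (π/m)^2/6 + (π/m)^4/120 - (π/m)^6/5040 ≤ Real.sin (π/m) / (π/m) := by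
    rw [le_div_iff₀ hx0]
    have : (1 - (π/m)^2/6 + (π/m)^4/120 - (π/m)^6/5040)*(π/m)
        = (π/m) - (π/m)^3/6 + (π/m)^5/120 - (π/m)^7/5040 := by ring
    linarith
  constructor
  · have hid : m^2/4 - (m^2/4 + 1/12)*(1 - (π/m)^2/6 + (π/m)^4/120) = loB m := by
      simp only [loB]; field_simp; ring
    have := mul_le_mul_of_nonneg_left hs_up hB.le
    rw [hseq]; linarith
  · have hid : m^2/4 - (m^2/4 + 1/12)*(1 - (π/m)^2/6 + (π/m)^4/120 - (π/m)^6/5040) = hiB m := by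
      simp only [hiB, loB]; field_simp; ring
    have := mul_le_mul_of_nonneg_left hs_lo hB.le
    rw [hseq]; linarith

lemma seqA_step (n : ℕ) (hn : 1 ≤ n) : seqA n < seqA (n+1) := by
  have h1 := (seqA_sandwich n hn).2
  have h2 := (seqA_sandwich (n+1) (by omega)).1
  have hn1 : (1:ℝ) ≤ (n:ℝ) := by exact_mod_cast hn
  have h3 := step_lemma (2*(n:ℝ)+1) (by linarith)
  have hcast : (2*((n+1:ℕ):ℝ)+1) = (2*(n:ℝ)+1)+2 := by push_cast; ring
  rw [hcast] at h2
  linarith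

lemma seqA_abs_bound (n : ℕ) (hn : 1 ≤ n) : |seqA n - (π^2-2)/24| ≤ 1/(n:ℝ) := by
  have hlo := (seqA_sandwich n hn).1
  have hhi := (seqA_sandwich n hn).2
  have hn1 : (1:ℝ) ≤ (n:ℝ) := by exact_mod_cast hn
  have hn0 : (0:ℝ) ≤ 1/(n:ℝ) := by positivity
  set m : ℝ := 2*(n:ℝ)+1 with hmdef
  have hm3 : (3:ℝ) ≤ m := by rw [hmdef]; linarith
  have hm0 : (0:ℝ) < m := by linarith
  simp only [hiB, loB] at hlo hhi
  set u : ℝ := 1/m^2 with hu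
  have hu0 : (0:ℝ) < u := by rw [hu]; positivity
  have hu9 : u ≤ 1/9 := by
    rw [hu]
    apply one_div_le_one_div_of_le (by norm_num)
    nlinarith
  have hun : u ≤ 1/(n:ℝ) := by
    rw [hu]
    apply one_div_le_one_div_of_le (by linarith)
    nlinarith
  have hp1 : (9.8696:ℝ) < π^2 := by nlinarith [Real.pi_gt_d6]
  have hp2 : π^2 < 9.86961 := by nlinarith [Real.pi_lt_d6, Real.pi_pos]
  have hK1 : (-0.07:ℝ) ≤ π^2/72 - π^4/480 := by nlinarith
  have hK2 : π^2/72 - π^4/480 ≤ 0 := by nlinarith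
  have hc1 : (0:ℝ) ≤ π^4/1440 := by positivity
  have hc2 : π^4/1440 ≤ 0.068 := by nlinarith
  have hd2 : π^6/20160 ≤ 0.048 := by nlinarith
  have he2 : π^6/60480 ≤ 0.016 := by nlinarith
  have t1 : (-0.07:ℝ)*u ≤ (π^2/72 - π^4/480)*u := mul_le_mul_of_nonneg_right hK1 hu0.le
  have t1' : (π^2/72 - π^4/480)*u ≤ 0 := mul_nonpos_of_nonpos_of_nonneg hK2 hu0.le
  have t2 : (π^4/1440)*u^2 ≤ 0.068*u^2 := mul_le_mul_of_nonneg_right hc2 (by positivity)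
  have t2' : (0:ℝ) ≤ (π^4/1440)*u^2 := by positivity
  have t3 : u^2 ≤ (1/9)*u := by nlinarith
  have t4 : (π^6/20160)*u^2 ≤ 0.048*u^2 := mul_le_mul_of_nonneg_right hd2 (by positivity)
  have t5 : (π^6/60480)*u^3 ≤ 0.016*u^3 := mul_le_mul_of_nonneg_right he2 (by positivity)
  have t6 : u^3 ≤ (1/9)*u^2 := by nlinarith
  rw [abs_le]
  constructor <;> nlinarith

theorem seqA_properties :
    StrictMonoOn seqA (Set.Ici 1) ∧
    Filter.Tendsto seqA Filter.atTop (nhds ((Real.pi^2 - 2) / 24)) ∧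
    0.32 ≤ seqA 1 ∧ (Real.pi^2 - 2) / 24 ≤ 0.33 := by
  refine ⟨?_, ?_, ?_, ?_⟩
  · -- strict mono
    have hmono : ∀ n : ℕ, 1 ≤ n → ∀ k : ℕ, seqA n < seqA (n + k + 1) := by
      intro n hn k
      induction k with
      | zero => simpa using seqA_step n hn
      | succ k ih =>
          have h := seqA_step (n+k+1) (by omega)
          have : n + (k+1) + 1 = (n+k+1) + 1 := by omega
          rw [this]
          linarith
    intro a ha b hb hab
    obtain ⟨k, rfl⟩ : ∃ k, b = a + k + 1 := ⟨b - a - 1, by omega⟩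
    exact hmono a ha k
  · -- tendsto
    rw [← tendsto_sub_nhds_zero_iff]
    apply squeeze_zero_norm' (a := fun n : ℕ => 1/(n:ℝ))
    · filter_upwards [eventually_ge_atTop 1] with n hn
      simpa [Real.norm_eq_abs] using seqA_abs_bound n hn
    · simpa using tendsto_one_div_atTop_nhds_zero_nat (𝕜 := ℝ)
  · -- seqA 1 ≥ 0.32
    have h1 : seqA 1 = 9/4 - 7*Real.sqrt 3/(2*π) := by
      simp only [seqA, Nat.cast_one]
      rw [show (2*(1:ℝ)+1) = 3 by norm_num]
      rw [show π/3 = π/3 from rfl, Real.sin_pi_div_three]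
      have hπ := Real.pi_pos
      field_simp
      ring
    have hs3 : Real.sqrt 3 < 1.7320509 := by
      nlinarith [Real.sq_sqrt (show (0:ℝ) ≤ 3 by norm_num), Real.sqrt_nonneg 3]
    have hπ := Real.pi_gt_d6
    have hπ0 := Real.pi_pos
    have key : 7*Real.sqrt 3/(2*π) ≤ 1.93 := by
      rw [div_le_iff₀ (by positivity)]
      nlinarith [Real.sqrt_nonneg 3]
    rw [h1]; norm_num at key ⊢; linarith
  · nlinarith [Real.pi_lt_d6, Real.pi_pos]
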